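/- arXiv:2403.05439 — 2 statements merged into one kernel-verified Lean document; each statement's English description precedes it below -/
import Mathlib

section
/- Let G be a finite simple graph, v a vertex of G, and G' = G − v the induced subgraph obtained by deleting v and all edges incident to v. Let σ be a Scarf face of I(G') and let w_1, …, w_t (t ≥ 1) be distinct elements of N_G(v). If there exists an edge e ∈ σ such that dist_G(e, vw_i) = 1 for some 1 ≤ i ≤ t, then σ ∪ {vw_1, …, vw_t} is not a Scarf face of I(G). -/
/-- The monomial (exponent vector) of an edge: `1` on its endpoints, `0` elsewhere. -/
def edgeMon {V : Type*} [DecidableEq V] (e : Sym2 V) : V → ℕ :=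
  fun x => if x ∈ e then 1 else 0

/-- The lcm (componentwise max) of the monomials of a finite set of edges. -/
def eLcm {V : Type*} [DecidableEq V] (σ : Finset (Sym2 V)) : V → ℕ :=
  σ.sup edgeMon

/-- `σ` is a Scarf face of the edge ideal `I(G)`, identified with a set of edges of `G`:
its lcm is distinct from the lcm of any other set of edges of `G`. -/
def IsScarf {V : Type*} [DecidableEq V] (G : SimpleGraph V) (σ : Finset (Sym2 V)) : Prop :=
  (∀ e ∈ σ, e ∈ G.edgeSet) ∧
    ∀ τ : Finset (Sym2 V), (∀ e ∈ τ, e ∈ G.edgeSet) → eLcm τ = eLcm σ → τ = σ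

/-- `dist_G(e, f) = 0`: the two edges share a vertex. -/
def Dist0 {V : Type*} (e f : Sym2 V) : Prop := ∃ x, x ∈ e ∧ x ∈ f

/-- `dist_G(e, f) = 1`: the edges are vertex-disjoint, but some endpoint of `e` is
adjacent in `G` to some endpoint of `f`. -/
def Dist1 {V : Type*} (G : SimpleGraph V) (e f : Sym2 V) : Prop :=
  ¬ Dist0 e f ∧ ∃ x ∈ e, ∃ y ∈ f, G.Adj x y

/-- The graph `G - v`: delete the vertex `v`, i.e. all edges incident to `v`
(keeping the vertex set). -/
def delVert {V : Type*} (G : SimpleGraph V) (v : V) : SimpleGraph V where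
  Adj x y := G.Adj x y ∧ x ≠ v ∧ y ≠ v
  symm := ⟨fun x y h => ⟨h.1.symm, h.2.2, h.2.1⟩⟩
  loopless := ⟨fun x h => G.loopless.irrefl x h.1⟩

theorem stmt7 {V : Type*} [Fintype V] [DecidableEq V] (G : SimpleGraph V) (v : V)
    (W : Finset V) (hW : ∀ w ∈ W, G.Adj v w) (hWne : W.Nonempty)
    (σ : Finset (Sym2 V)) (hσ : IsScarf (delVert G v) σ)
    (hex : ∃ e ∈ σ, ∃ w ∈ W, Dist1 G e s(v, w)) :
    ¬ IsScarf G (σ ∪ W.image (fun w => s(v, w))) := by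
  intro hS
  obtain ⟨e, he, w, hwW, hnd, x, hx, y, hy, hxy⟩ := hex
  set S := σ ∪ W.image (fun w => s(v, w)) with hSdef
  have heS : e ∈ S := Finset.mem_union_left _ he
  have hvwS : s(v, w) ∈ S := Finset.mem_union_right _ (Finset.mem_image_of_mem _ hwW)
  have hxv : x ≠ v := fun h => hnd ⟨x, hx, by rw [h]; exact Sym2.mem_mk_left v w⟩
  have hxw : x ≠ w := fun h => hnd ⟨x, hx, by rw [h]; exact Sym2.mem_mk_right v w⟩
  have hef : e ≠ s(x, y) := fun h => hnd ⟨y, by rw [h]; exact Sym2.mem_mk_right x y, hy⟩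
  have hvwf : s(v, w) ≠ s(x, y) := by
    intro h
    have hx' : x ∈ s(v, w) := by rw [h]; exact Sym2.mem_mk_left x y
    rcases Sym2.mem_iff.mp hx' with h' | h'
    · exact hxv h'
    · exact hxw h'
  have hSG : ∀ g ∈ S, g ∈ G.edgeSet := by
    intro g hg
    rcases Finset.mem_union.mp hg with h | h
    · have hle : delVert G v ≤ G := fun a b hab => (show G.Adj a b ∧ a ≠ v ∧ b ≠ v from hab).1
      exact SimpleGraph.edgeSet_mono hle (hσ.1 g h)
    · obtain ⟨u, hu, rfl⟩ := Finset.mem_image.mp h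
      exact G.mem_edgeSet.mpr (hW u hu)
  have cov : ∀ (T : Finset (Sym2 V)), e ∈ T → s(v, w) ∈ T →
      edgeMon s(x, y) ≤ eLcm T := by
    intro T heT hvwT z
    by_cases hz : z ∈ s(x, y)
    · have h1 : edgeMon s(x, y) z = 1 := by simp [edgeMon, hz]
      rw [h1]
      rcases Sym2.mem_iff.mp hz with rfl | rfl
      · have h2 : edgeMon e ≤ eLcm T := Finset.le_sup heT
        have h3 : edgeMon e z = 1 := by simp [edgeMon, hx]
        calc (1 : ℕ) = edgeMon e z := h3.symm
          _ ≤ eLcm T z := h2 z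
      · have h2 : edgeMon (s(v, w)) ≤ eLcm T := Finset.le_sup hvwT
        have h3 : edgeMon (s(v, w)) z = 1 := by simp [edgeMon, hy]
        calc (1 : ℕ) = edgeMon (s(v, w)) z := h3.symm
          _ ≤ eLcm T z := h2 z
    · simp [edgeMon, hz]
  by_cases hf : s(x, y) ∈ S
  · have hcov := cov (S.erase s(x, y))
      (Finset.mem_erase.mpr ⟨hef, heS⟩) (Finset.mem_erase.mpr ⟨hvwf, hvwS⟩)
    have hlcm : eLcm (S.erase s(x, y)) = eLcm S := by
      conv_rhs => rw [← Finset.insert_erase hf]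
      show eLcm (S.erase s(x, y)) = (insert (s(x, y)) (S.erase s(x, y))).sup edgeMon
      rw [Finset.sup_insert]
      exact (sup_eq_right.mpr hcov).symm
    have heq := hS.2 _ (fun g hg => hSG g (Finset.erase_subset _ _ hg)) hlcm
    have : s(x, y) ∈ S.erase s(x, y) := heq.symm ▸ hf
    exact Finset.notMem_erase _ _ this
  · have hcov := cov S heS hvwS
    have hlcm : eLcm (insert (s(x, y)) S) = eLcm S := by
      show (insert (s(x, y)) S).sup edgeMon = eLcm S
      rw [Finset.sup_insert]
      exact sup_eq_right.mpr hcov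
    have hτ : ∀ g ∈ insert (s(x, y)) S, g ∈ G.edgeSet := by
      intro g hg
      rcases Finset.mem_insert.mp hg with rfl | hg'
      · exact G.mem_edgeSet.mpr hxy
      · exact hSG g hg'
    have heq := hS.2 _ hτ hlcm
    exact hf (heq ▸ Finset.mem_insert_self _ _)
end

section
/- Let G be a finite simple graph, v a vertex of G, and G' = G − v the induced subgraph obtained by deleting v and all edges incident to v. Let σ be a Scarf face of I(G') and let w_1, …, w_t (t ≥ 1) be distinct elements of N_G(v). Suppose dist_G(σ, vw_i) = 0 for some 1 ≤ i ≤ t, and dist_G(e, vw_j) ≠ 1 for every e ∈ σ and every 1 ≤ j ≤ t. Then σ ∪ {vw_1, …, vw_t} is a Scarf face of I(G' ∪ {vw_1, …, vw_t}) if and only if t = 1. Here G' ∪ {vw_1, …, vw_t} denotes the subgraph of G obtained from G' by adding back the vertex v and the edges vw_1, …, vw_t. -/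
/-- The graph `G' ∪ {vw₁, …, vwₜ}`: obtained from `G - v` by adding back the vertex `v`
and the edges `vw` for `w ∈ W`. -/
def addBack {V : Type*} (G : SimpleGraph V) (v : V) (W : Finset V) : SimpleGraph V :=
  SimpleGraph.fromEdgeSet ((delVert G v).edgeSet ∪ {e : Sym2 V | ∃ w ∈ W, e = s(v, w)})


section Aux
variable {V : Type*} [DecidableEq V]

lemma eLcm_apply' (σ : Finset (Sym2 V)) (x : V) :
    eLcm σ x = σ.sup (fun e => edgeMon e x) :=
  Finset.sup_apply σ edgeMon x

lemma cover_iff (σ : Finset (Sym2 V)) (x : V) :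
    (∃ e ∈ σ, x ∈ e) ↔ eLcm σ x ≠ 0 := by
  rw [eLcm_apply', ← bot_eq_zero (α := ℕ), Ne, Finset.sup_eq_bot_iff]
  push_neg
  simp [edgeMon, bot_eq_zero]

lemma eLcm_le_one (σ : Finset (Sym2 V)) (x : V) : eLcm σ x ≤ 1 := by
  rw [eLcm_apply']
  refine Finset.sup_le fun e _ => ?_
  simp only [edgeMon]
  split <;> omega

lemma eLcm_eq_iff {τ σ : Finset (Sym2 V)}
    (h : ∀ x, (∃ e ∈ τ, x ∈ e) ↔ (∃ e ∈ σ, x ∈ e)) : eLcm τ = eLcm σ := by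
  funext x
  have h1 := eLcm_le_one τ x
  have h2 := eLcm_le_one σ x
  have hiff : eLcm τ x ≠ 0 ↔ eLcm σ x ≠ 0 := by
    rw [← cover_iff, ← cover_iff]; exact h x
  omega

lemma not_mem_delVert (G : SimpleGraph V) (v : V) {e : Sym2 V}
    (he : e ∈ (delVert G v).edgeSet) : v ∉ e := by
  induction e using Sym2.ind with
  | _ a b =>
    rw [SimpleGraph.mem_edgeSet] at he
    intro hv
    rw [Sym2.mem_iff] at hv
    rcases hv with h | h
    · exact he.2.1 h.symm
    · exact he.2.2 h.symm

lemma mem_addBack_iff (G : SimpleGraph V) (v : V) (W : Finset V) (e : Sym2 V) :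
    e ∈ (addBack G v W).edgeSet ↔
      (e ∈ (delVert G v).edgeSet ∨ ∃ w ∈ W, e = s(v, w)) ∧ ¬ e.IsDiag := by
  rw [addBack, SimpleGraph.edgeSet_fromEdgeSet]
  simp [Set.mem_diff]

end Aux

theorem stmt8 {V : Type*} [Fintype V] [DecidableEq V] (G : SimpleGraph V) (v : V)
    (W : Finset V) (hW : ∀ w ∈ W, G.Adj v w) (hWne : W.Nonempty)
    (σ : Finset (Sym2 V)) (hσ : IsScarf (delVert G v) σ)
    (h0 : ∃ w ∈ W, ∃ e ∈ σ, Dist0 e s(v, w))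
    (h1 : ∀ e ∈ σ, ∀ w ∈ W, ¬ Dist1 G e s(v, w)) :
    IsScarf (addBack G v W) (σ ∪ W.image (fun w => s(v, w))) ↔ W.card = 1 := by

  classical
  obtain ⟨hσG, hσS⟩ := hσ
  obtain ⟨w0, hw0W, e0, he0σ, hd0⟩ := h0
  have hve0 : v ∉ e0 := not_mem_delVert G v (hσG e0 he0σ)
  have hw0e0 : w0 ∈ e0 := by
    obtain ⟨x, hx1, hx2⟩ := hd0
    rw [Sym2.mem_iff] at hx2
    rcases hx2 with rfl | rfl
    · exact absurd hx1 hve0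
    · exact hx1
  have hvw0 : v ≠ w0 := (hW w0 hw0W).ne
  set F := σ ∪ W.image (fun w => s(v, w)) with hF
  have hvσ : ∀ e ∈ σ, v ∉ e := fun e he => not_mem_delVert G v (hσG e he)
  have hσsub : ∀ e ∈ σ, e ∈ (addBack G v W).edgeSet := fun e he => by
    rw [mem_addBack_iff]
    exact ⟨Or.inl (hσG e he), SimpleGraph.not_isDiag_of_mem_edgeSet _ (hσG e he)⟩
  have hWsub : ∀ w ∈ W, s(v, w) ∈ (addBack G v W).edgeSet := fun w hw => by
    rw [mem_addBack_iff]
    exact ⟨Or.inr ⟨w, hw, rfl⟩, by simp [(hW w hw).ne]⟩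
  have hFsub : ∀ e ∈ F, e ∈ (addBack G v W).edgeSet := by
    intro e he
    rw [hF, Finset.mem_union] at he
    rcases he with h | h
    · exact hσsub e h
    · obtain ⟨w, hw, rfl⟩ := Finset.mem_image.mp h
      exact hWsub w hw
  constructor
  · rintro ⟨-, hS⟩
    by_contra hc
    have hcard : 1 < W.card := by
      have := Finset.card_pos.mpr hWne
      omega
    obtain ⟨w1, hw1W, hw1⟩ := Finset.exists_mem_ne hcard w0
    set τ := σ ∪ (W.erase w0).image (fun w => s(v, w)) with hτ
    have hτF : τ ⊆ F :=
      Finset.union_subset_union_right (Finset.image_subset_image (Finset.erase_subset _ _))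
    have hlcm : eLcm τ = eLcm F := by
      apply eLcm_eq_iff
      intro x
      constructor
      · rintro ⟨e, he, hx⟩; exact ⟨e, hτF he, hx⟩
      · rintro ⟨e, he, hx⟩
        rw [hF, Finset.mem_union] at he
        rcases he with h | h
        · exact ⟨e, Finset.mem_union_left _ h, hx⟩
        · obtain ⟨w, hw, rfl⟩ := Finset.mem_image.mp h
          by_cases hww : w = w0
          · subst hww
            rw [Sym2.mem_iff] at hx
            rcases hx with rfl | rfl
            · exact ⟨s(x, w1), Finset.mem_union_right _ (Finset.mem_image.mpr
                ⟨w1, Finset.mem_erase.mpr ⟨hw1, hw1W⟩, rfl⟩), Sym2.mem_mk_left _ _⟩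
            · exact ⟨e0, Finset.mem_union_left _ he0σ, hw0e0⟩
          · exact ⟨s(v, w), Finset.mem_union_right _ (Finset.mem_image.mpr
              ⟨w, Finset.mem_erase.mpr ⟨hww, hw⟩, rfl⟩), hx⟩
    have hτeq := hS τ (fun e he => hFsub e (hτF he)) hlcm
    have hmemF : s(v, w0) ∈ F :=
      Finset.mem_union_right _ (Finset.mem_image.mpr ⟨w0, hw0W, rfl⟩)
    rw [← hτeq, hτ, Finset.mem_union] at hmemF
    rcases hmemF with h | h
    · exact hvσ _ h (Sym2.mem_mk_left _ _)
    · obtain ⟨w, hw, heq⟩ := Finset.mem_image.mp h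
      have hww0 : w = w0 := by
        rcases Sym2.eq_iff.mp heq with ⟨-, h'⟩ | ⟨h1, h2⟩
        · exact h'
        · exact absurd h1 hvw0
      exact (Finset.mem_erase.mp hw).1 hww0
  · intro hcard
    obtain ⟨w', hwW'⟩ := Finset.card_eq_one.mp hcard
    have hw0' : w0 = w' := by
      rw [hwW'] at hw0W; exact Finset.mem_singleton.mp hw0W
    have hw' : W = {w0} := by rw [hwW', hw0']
    have hFins : F = insert s(v, w0) σ := by
      rw [hF, hw', Finset.image_singleton, Finset.union_comm, ← Finset.insert_eq]
    refine ⟨hFsub, ?_⟩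
    intro τ hτG hlcm
    have hcov : ∀ x, (∃ e ∈ τ, x ∈ e) ↔ (∃ e ∈ F, x ∈ e) := by
      intro x
      rw [cover_iff, cover_iff, hlcm]
    obtain ⟨f, hfτ, hvf⟩ := (hcov v).mpr
      ⟨s(v, w0), by rw [hFins]; exact Finset.mem_insert_self _ _, Sym2.mem_mk_left _ _⟩
    have hmemτ : s(v, w0) ∈ τ := by
      have hf := hτG f hfτ
      rw [mem_addBack_iff] at hf
      rcases hf.1 with h | ⟨w, hwW, rfl⟩
      · exact absurd hvf (not_mem_delVert G v h)
      · rw [hw', Finset.mem_singleton] at hwW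
        rw [← hwW]; exact hfτ
    set τ' := τ.erase s(v, w0) with hτ'
    have hτ'G : ∀ e ∈ τ', e ∈ (delVert G v).edgeSet := by
      intro e he
      obtain ⟨hne, heτ⟩ := Finset.mem_erase.mp he
      have h' := hτG e heτ
      rw [mem_addBack_iff] at h'
      rcases h'.1 with h | ⟨w, hwW, rfl⟩
      · exact h
      · rw [hw', Finset.mem_singleton] at hwW
        exact absurd (by rw [hwW]) hne
    have hcovτ' : ∀ x, x ≠ w0 → ((∃ e ∈ τ', x ∈ e) ↔ (∃ e ∈ σ, x ∈ e)) := by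
      intro x hx
      by_cases hxv : x = v
      · subst hxv
        constructor
        · rintro ⟨e, he, hxe⟩; exact absurd hxe (not_mem_delVert G x (hτ'G e he))
        · rintro ⟨e, he, hxe⟩; exact absurd hxe (hvσ e he)
      · constructor
        · rintro ⟨e, he, hxe⟩
          obtain ⟨e', he', hxe'⟩ := (hcov x).mp ⟨e, Finset.erase_subset _ _ he, hxe⟩
          rw [hFins, Finset.mem_insert] at he'
          rcases he' with rfl | h
          · rw [Sym2.mem_iff] at hxe'; tauto
          · exact ⟨e', h, hxe'⟩
        · rintro ⟨e, he, hxe⟩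
          obtain ⟨e', he', hxe'⟩ := (hcov x).mpr
            ⟨e, by rw [hFins]; exact Finset.mem_insert_of_mem he, hxe⟩
          refine ⟨e', Finset.mem_erase.mpr ⟨?_, he'⟩, hxe'⟩
          rintro rfl
          rw [Sym2.mem_iff] at hxe'; tauto
    by_cases hn : ∃ e ∈ τ', w0 ∈ e
    · have hlcm' : eLcm τ' = eLcm σ := by
        apply eLcm_eq_iff
        intro x
        by_cases hx : x = w0
        · subst hx; exact ⟨fun _ => ⟨e0, he0σ, hw0e0⟩, fun _ => hn⟩
        · exact hcovτ' x hx
      have hτ'σ := hσS τ' hτ'G hlcm'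
      rw [hFins, ← hτ'σ, hτ', Finset.insert_erase hmemτ]
    · exfalso
      push_neg at hn
      have hlcm'' : eLcm (insert e0 τ') = eLcm σ := by
        apply eLcm_eq_iff
        intro x
        by_cases hx : x = w0
        · subst hx
          exact ⟨fun _ => ⟨e0, he0σ, hw0e0⟩,
            fun _ => ⟨e0, Finset.mem_insert_self _ _, hw0e0⟩⟩
        · constructor
          · rintro ⟨e, he, hxe⟩
            rcases Finset.mem_insert.mp he with rfl | h
            · exact ⟨e, he0σ, hxe⟩
            · exact (hcovτ' x hx).mp ⟨e, h, hxe⟩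
          · intro h
            obtain ⟨e, he, hxe⟩ := (hcovτ' x hx).mpr h
            exact ⟨e, Finset.mem_insert_of_mem he, hxe⟩
      have heq := hσS (insert e0 τ') (by
        intro e he
        rcases Finset.mem_insert.mp he with rfl | h
        · exact hσG e he0σ
        · exact hτ'G e h) hlcm''
      have he0τ' : e0 ∉ τ' := fun h => hn e0 h hw0e0
      have hτ'eq : τ' = σ.erase e0 := by
        rw [← heq, Finset.erase_insert he0τ']
      have hnd : ¬ e0.IsDiag := SimpleGraph.not_isDiag_of_mem_edgeSet _ (hσG e0 he0σ)
      set u := Sym2.Mem.other hw0e0 with hu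
      have huu : s(w0, u) = e0 := Sym2.other_spec hw0e0
      have hue0 : u ∈ e0 := Sym2.other_mem hw0e0
      have hune : u ≠ w0 := Sym2.other_ne hnd hw0e0
      have hunv : u ≠ v := fun h => hve0 (h ▸ hue0)
      obtain ⟨e2, he2τ', hue2⟩ := (hcovτ' u hune).mpr ⟨e0, he0σ, hue0⟩
      have he2σ : e2 ∈ σ := Finset.mem_of_mem_erase (hτ'eq ▸ he2τ')
      have hw0e2 : w0 ∉ e2 := fun h => hn e2 he2τ' h
      apply h1 e2 he2σ w0 hw0W
      refine ⟨?_, u, hue2, w0, Sym2.mem_mk_right _ _, ?_⟩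
      · rintro ⟨x, hx1, hx2⟩
        rw [Sym2.mem_iff] at hx2
        rcases hx2 with rfl | rfl
        · exact not_mem_delVert G _ (hσG e2 he2σ) hx1
        · exact hw0e2 hx1
      · have hadj : (delVert G v).Adj w0 u := by
          rw [← SimpleGraph.mem_edgeSet, huu]
          exact hσG e0 he0σ
        exact hadj.1.symm
end
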